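/- Let Δ₁, Δ₂ ≥ 2 be real numbers, let λ(Δ₁, Δ₂) = Δ₂^{Δ₁}·((Δ₁+1)/(Δ₁Δ₂ − 1))^{Δ₁+1}, and for Δ > 0 define f_Δ(a) = 1/(1 + λ·a^Δ) on (0,1]. Then for every real λ with 0 < λ < λ(Δ₁, Δ₂): (i) there is a unique a* ∈ (0,1] with f_{Δ₁}(f_{Δ₂}(a*)) = a*; and (ii) there is a constant c with 0 < c ≤ (1/2)·(1 + λ/λ(Δ₁,Δ₂)) < 1 such that for every a₀ ∈ (0,1] and every integer t ≥ 1, |(f_{Δ₁} ∘ f_{Δ₂})^t(a₀) − a*| ≤ c^{t−1}·ln(λ + 1). -/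

import Mathlib

open Real

lemma amgm_rpow {p C D y : ℝ} (hp : 1 ≤ p) (hC : 0 < C) (hD : 0 < D) (hy : 0 ≤ y) :
    y ^ p * (C - D * y) ≤ p ^ p * C ^ (p + 1) / ((p + 1) ^ (p + 1) * D ^ p) := by
  have hp0 : (0:ℝ) < p := lt_of_lt_of_le one_pos hp
  have hp1 : (0:ℝ) < p + 1 := by linarith
  rcases le_or_gt C (D * y) with h | h
  · have h1 : y ^ p * (C - D * y) ≤ 0 :=
      mul_nonpos_of_nonneg_of_nonpos (Real.rpow_nonneg hy p) (by linarith)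
    have h2 : (0:ℝ) ≤ p ^ p * C ^ (p + 1) / ((p + 1) ^ (p + 1) * D ^ p) := by positivity
    linarith
  · set t := D * y with ht
    have ht0 : 0 ≤ t := mul_nonneg hD.le hy
    have htC : t < C := h
    -- weighted AM-GM
    set A := t * ((p + 1) / p) with hA
    set B := (C - t) * (p + 1) with hB
    have hA0 : 0 ≤ A := by positivity
    have hB0 : 0 ≤ B := by
      have : 0 ≤ C - t := by linarith
      positivity
    have hw : p / (p + 1) + 1 / (p + 1) = 1 := by field_simp
    have hgm := Real.geom_mean_le_arith_mean2_weighted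
      (by positivity : (0:ℝ) ≤ p / (p + 1)) (by positivity : (0:ℝ) ≤ 1 / (p + 1)) hA0 hB0 hw
    have hsum : p / (p + 1) * A + 1 / (p + 1) * B = C := by
      rw [hA, hB]; field_simp; ring
    rw [hsum] at hgm
    have hpow := Real.rpow_le_rpow (by positivity) hgm hp1.le
    have hL : (A ^ (p / (p + 1)) * B ^ (1 / (p + 1))) ^ (p + 1) = A ^ p * B := by
      rw [Real.mul_rpow (Real.rpow_nonneg hA0 _) (Real.rpow_nonneg hB0 _),
        ← Real.rpow_mul hA0, ← Real.rpow_mul hB0,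
        div_mul_cancel₀ _ (ne_of_gt hp1), one_div, inv_mul_cancel₀ (ne_of_gt hp1),
        Real.rpow_one]
    have hPP : (0:ℝ) < p ^ p := Real.rpow_pos_of_pos hp0 p
    have key2 : A ^ p * B ≤ C ^ (p + 1) := hL ▸ hpow
    have hAp : A ^ p = D ^ p * y ^ p * ((p + 1) ^ p / p ^ p) := by
      rw [hA, ht, Real.mul_rpow (mul_nonneg hD.le hy) (by positivity),
        Real.mul_rpow hD.le hy, Real.div_rpow hp1.le hp0.le]
    rw [hAp, hB] at key2
    have key3 : D ^ p * y ^ p * (p + 1) ^ p * ((C - t) * (p + 1)) ≤ C ^ (p + 1) * p ^ p := by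
      have h' := mul_le_mul_of_nonneg_right key2 hPP.le
      calc D ^ p * y ^ p * (p + 1) ^ p * ((C - t) * (p + 1))
          = D ^ p * y ^ p * ((p + 1) ^ p / p ^ p) * ((C - t) * (p + 1)) * p ^ p := by
            field_simp
        _ ≤ C ^ (p + 1) * p ^ p := h'
    have hsplit : (p + 1 : ℝ) ^ (p + 1) = (p + 1) ^ p * (p + 1) := by
      nth_rewrite 1 [Real.rpow_add hp1]
      rw [Real.rpow_one]
    rw [le_div_iff₀ (by positivity), hsplit]
    nlinarith [key3]

set_option maxHeartbeats 1000000 in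
lemma main_ineq {p q l L y : ℝ} (hp : 2 ≤ p) (hq : 2 ≤ q)
    (hLdef : L = q ^ p * ((p + 1) / (p * q - 1)) ^ (p + 1)) (hl0 : 0 < l) (hl : l < L)
    (hy : 0 ≤ y) :
    2 * L * l * (p * q) * (y ^ p * (1 - y)) ≤ (L + l) * (1 + l * y ^ p) := by
  have hp0 : (0:ℝ) < p := by linarith
  have hq0 : (0:ℝ) < q := by linarith
  have hp1 : (0:ℝ) < p + 1 := by linarith
  have hpq1 : (0:ℝ) < p * q - 1 := by nlinarith
  have hL0 : (0:ℝ) < L := by rw [hLdef]; positivity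
  set M := 2 * L * (p * q) with hM
  have hMbig : L + l < M := by nlinarith
  set C := l * (M - (L + l)) with hC
  set D := l * M with hD
  have hC0 : (0:ℝ) < C := by
    have : 0 < M - (L + l) := by linarith
    positivity
  have hD0 : (0:ℝ) < D := by positivity
  have key := amgm_rpow (by linarith : (1:ℝ) ≤ p) hC0 hD0 hy
  have main2 : p ^ p * C ^ (p + 1) / ((p + 1) ^ (p + 1) * D ^ p) ≤ L + l := by
    set sb := M - (L + l) with hsb
    set s0 := M - 2 * L with hs0
    have hsb0 : (0:ℝ) < sb := by rw [hsb]; linarith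
    have hs0eq : s0 = 2 * L * (p * q - 1) := by rw [hs0, hM]; ring
    have hs0pos : (0:ℝ) < s0 := by rw [hs0eq]; positivity
    have hs0ge : 2 * L * (p + 1) ≤ s0 := by
      rw [hs0eq]
      have h1 : p + 1 ≤ p * q - 1 := by nlinarith
      nlinarith
    set x' := (L - l) / (2 * L * (p + 1)) with hx'
    have hx'0 : (0:ℝ) ≤ x' := by
      apply div_nonneg (by linarith) (by positivity)
    have hmul : 2 * L * (p + 1) * x' = L - l := by
      rw [hx']; field_simp
    have step1 : sb ≤ s0 * (1 + x') := by
      have h1 := mul_le_mul_of_nonneg_right hs0ge hx'0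
      have : sb = s0 + (L - l) := by rw [hsb, hs0]; ring
      nlinarith
    have step2 : sb ^ (p + 1) ≤ s0 ^ (p + 1) * (1 + x') ^ (p + 1) := by
      rw [← Real.mul_rpow hs0pos.le (by linarith)]
      exact Real.rpow_le_rpow hsb0.le step1 hp1.le
    set a := (L - l) / (2 * L) with ha
    have step3 : (1 + x') ^ (p + 1) ≤ Real.exp a := by
      have e1 : 1 + x' ≤ Real.exp x' := by
        have := Real.add_one_le_exp x'; linarith
      have e2 := Real.rpow_le_rpow (by linarith) e1 hp1.le
      have e3 : Real.exp x' ^ (p + 1) = Real.exp a := by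
        rw [← Real.exp_one_rpow x', ← Real.rpow_mul (Real.exp_pos 1).le,
          Real.exp_one_rpow]
        congr 1
        rw [hx', ha]; field_simp
      rwa [e3] at e2
    have hE := Real.exp_pos a
    have step4 : Real.exp a * (L + l) ≤ 2 * L := by
      have h5 : (L + l) / (2 * L) ≤ (Real.exp a)⁻¹ := by
        rw [← Real.exp_neg]
        calc (L + l) / (2 * L) = -a + 1 := by rw [ha]; field_simp; ring
          _ ≤ _ := Real.add_one_le_exp _
      have h6 := mul_le_mul_of_nonneg_left h5 hE.le
      rw [mul_inv_cancel₀ (ne_of_gt hE)] at h6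
      have h7 := mul_le_mul_of_nonneg_right h6 (by linarith : (0:ℝ) ≤ 2 * L)
      calc Real.exp a * (L + l) = Real.exp a * ((L + l) / (2 * L)) * (2 * L) := by
            field_simp
        _ ≤ 1 * (2 * L) := h7
        _ = 2 * L := one_mul _
    have hfour : 2 * (l * Real.exp a) ≤ L + l := by
      nlinarith [mul_le_mul_of_nonneg_left step4 (by linarith : (0:ℝ) ≤ 2 * l),
        sq_nonneg (L - l)]
    have hstep : 2 * (l * sb ^ (p + 1)) ≤ (L + l) * s0 ^ (p + 1) := by
      have hA1 : sb ^ (p + 1) ≤ s0 ^ (p + 1) * Real.exp a :=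
        step2.trans (mul_le_mul_of_nonneg_left step3 (Real.rpow_nonneg hs0pos.le _))
      have hA2 := mul_le_mul_of_nonneg_left hA1 (by linarith : (0:ℝ) ≤ 2 * l)
      have hA3 := mul_le_mul_of_nonneg_right hfour (Real.rpow_nonneg hs0pos.le (p + 1))
      calc 2 * (l * sb ^ (p + 1)) = 2 * l * sb ^ (p + 1) := by ring
        _ ≤ 2 * l * (s0 ^ (p + 1) * Real.exp a) := hA2
        _ = 2 * (l * Real.exp a) * s0 ^ (p + 1) := by ring
        _ ≤ (L + l) * s0 ^ (p + 1) := hA3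
    have hLkey : L * (p * q - 1) ^ (p + 1) = (p + 1) ^ (p + 1) * q ^ p := by
      rw [hLdef, Real.div_rpow hp1.le hpq1.le]
      have hne : (p * q - 1) ^ (p + 1) ≠ 0 := ne_of_gt (Real.rpow_pos_of_pos hpq1 _)
      field_simp
    have hfinal : p ^ p * s0 ^ (p + 1) = 2 * ((p + 1) ^ (p + 1) * M ^ p) := by
      have h1 : s0 ^ (p + 1) = (2 * L) ^ (p + 1) * (p * q - 1) ^ (p + 1) := by
        rw [hs0eq, Real.mul_rpow (by positivity) hpq1.le]
      have h2 : (2 * L) ^ (p + 1) = (2 * L) ^ p * (2 * L) := by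
        nth_rewrite 1 [Real.rpow_add (by positivity)]
        rw [Real.rpow_one]
      have h3 : M ^ p = (2 * L) ^ p * (p ^ p * q ^ p) := by
        rw [hM]
        rw [show 2 * L * (p * q) = 2 * L * p * q by ring,
          Real.mul_rpow (by positivity) hq0.le, Real.mul_rpow (by positivity) hp0.le]
        ring
      rw [h1, h2, h3]
      linear_combination (2 * (2 * L) ^ p * p ^ p) * hLkey
    -- assemble
    have hCpow : C ^ (p + 1) = l ^ p * l * sb ^ (p + 1) := by
      rw [hC, Real.mul_rpow hl0.le hsb0.le]
      congr 1
      nth_rewrite 1 [Real.rpow_add hl0]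
      rw [Real.rpow_one]
    have hDpow : D ^ p = l ^ p * M ^ p := by
      rw [hD, Real.mul_rpow hl0.le (by rw [hM]; positivity)]
    rw [div_le_iff₀ (by positivity), hCpow, hDpow]
    have hlp := Real.rpow_pos_of_pos hl0 p
    have hpp := Real.rpow_pos_of_pos hp0 p
    have hchain : 2 * (p ^ p * (l ^ p * l * sb ^ (p + 1)))
        ≤ 2 * ((L + l) * ((p + 1) ^ (p + 1) * (l ^ p * M ^ p))) := by
      calc 2 * (p ^ p * (l ^ p * l * sb ^ (p + 1)))
          = p ^ p * l ^ p * (2 * (l * sb ^ (p + 1))) := by ring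
        _ ≤ p ^ p * l ^ p * ((L + l) * s0 ^ (p + 1)) :=
            mul_le_mul_of_nonneg_left hstep (mul_nonneg hpp.le hlp.le)
        _ = l ^ p * (L + l) * (p ^ p * s0 ^ (p + 1)) := by ring
        _ = l ^ p * (L + l) * (2 * ((p + 1) ^ (p + 1) * M ^ p)) := by rw [hfinal]
        _ = 2 * ((L + l) * ((p + 1) ^ (p + 1) * (l ^ p * M ^ p))) := by ring
    linarith
  have expand : 2 * L * l * (p * q) * (y ^ p * (1 - y))
      = (L + l) * (1 + l * y ^ p) - ((L + l) - y ^ p * (C - D * y)) := by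
    rw [hC, hD, hM]; ring
  rw [expand]
  have := key.trans main2
  linarith

lemma exp_abs_sub {x y : ℝ} (hx : x ≤ 0) (hy : y ≤ 0) :
    |Real.exp x - Real.exp y| ≤ |x - y| := by
  wlog h : y ≤ x generalizing x y
  · rw [abs_sub_comm, abs_sub_comm x y]; exact this hy hx (le_of_not_ge h)
  have h1 : Real.exp y ≤ Real.exp x := Real.exp_le_exp.mpr h
  have h2 : Real.exp x ≤ 1 := Real.exp_le_one_iff.mpr hx
  have h3 := Real.add_one_le_exp (y - x)
  have h4 : Real.exp y = Real.exp x * Real.exp (y - x) := by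
    rw [← Real.exp_add]; ring_nf
  rw [abs_of_nonneg (by linarith), abs_of_nonneg (by linarith)]
  have h5 : Real.exp x - Real.exp y = Real.exp x * (1 - Real.exp (y - x)) := by
    rw [h4]; ring
  have h6 : 1 - Real.exp (y - x) ≤ x - y := by linarith
  have h7 : 0 ≤ 1 - Real.exp (y - x) ∨ 1 - Real.exp (y - x) < 0 := le_or_gt _ _
  rcases h7 with h7 | h7
  · calc Real.exp x - Real.exp y = Real.exp x * (1 - Real.exp (y - x)) := h5
      _ ≤ 1 * (x - y) := mul_le_mul h2 h6 h7 one_pos.le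
      _ = x - y := one_mul _
  · nlinarith [Real.exp_pos x]

/-- Let `Δ₁, Δ₂ ≥ 2`, `λ(Δ₁,Δ₂) = Δ₂^Δ₁ ((Δ₁+1)/(Δ₁Δ₂ − 1))^(Δ₁+1)`, and
`f_Δ a = 1/(1 + λ a^Δ)`.  For every `0 < λ < λ(Δ₁,Δ₂)` the composition
`f_{Δ₁} ∘ f_{Δ₂}` has a unique fixed point `a* ∈ (0,1]`, and there is a
constant `0 < c ≤ (1/2)(1 + λ/λ(Δ₁,Δ₂)) < 1` with
`|(f_{Δ₁} ∘ f_{Δ₂})^[t] a₀ − a*| ≤ c^(t−1) ln(λ+1)` for all `a₀ ∈ (0,1]`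
and integers `t ≥ 1`. -/
theorem stmt17 (Δ₁ Δ₂ : ℝ) (h1 : 2 ≤ Δ₁) (h2 : 2 ≤ Δ₂) (l : ℝ) (hl0 : 0 < l)
    (hl : l < Δ₂ ^ Δ₁ * ((Δ₁ + 1) / (Δ₁ * Δ₂ - 1)) ^ (Δ₁ + 1)) :
    ∃ astar ∈ Set.Ioc (0 : ℝ) 1,
      1 / (1 + l * (1 / (1 + l * astar ^ Δ₂)) ^ Δ₁) = astar ∧
      (∀ a ∈ Set.Ioc (0 : ℝ) 1,
        1 / (1 + l * (1 / (1 + l * a ^ Δ₂)) ^ Δ₁) = a → a = astar) ∧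
      ∃ c : ℝ, 0 < c ∧
        c ≤ (1 / 2) * (1 + l / (Δ₂ ^ Δ₁ * ((Δ₁ + 1) / (Δ₁ * Δ₂ - 1)) ^ (Δ₁ + 1))) ∧
        (1 / 2) * (1 + l / (Δ₂ ^ Δ₁ * ((Δ₁ + 1) / (Δ₁ * Δ₂ - 1)) ^ (Δ₁ + 1))) < 1 ∧
        ∀ a₀ ∈ Set.Ioc (0 : ℝ) 1, ∀ t : ℕ, 1 ≤ t →
          |(fun a : ℝ => 1 / (1 + l * (1 / (1 + l * a ^ Δ₂)) ^ Δ₁))^[t] a₀ - astar|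
            ≤ c ^ (t - 1) * Real.log (l + 1) := by
  set L := Δ₂ ^ Δ₁ * ((Δ₁ + 1) / (Δ₁ * Δ₂ - 1)) ^ (Δ₁ + 1) with hLdef
  have hp0 : (0:ℝ) < Δ₁ := by linarith
  have hq0 : (0:ℝ) < Δ₂ := by linarith
  have hpq1 : (0:ℝ) < Δ₁ * Δ₂ - 1 := by nlinarith
  have hL0 : (0:ℝ) < L := by rw [hLdef]; positivity
  set F : ℝ → ℝ := fun a : ℝ => 1 / (1 + l * (1 / (1 + l * a ^ Δ₂)) ^ Δ₁) with hF
  set g : ℝ → ℝ := fun u => Real.log (F (Real.exp u)) with hg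
  set c : ℝ := (1 / 2) * (1 + l / L) with hc
  have hc_eq : c = (L + l) / (2 * L) := by rw [hc]; field_simp
  have hc0 : 0 < c := by rw [hc_eq]; positivity
  have hc1 : c < 1 := by rw [hc_eq, div_lt_one (by positivity)]; linarith
  -- basic bounds on F
  have Fb : ∀ a : ℝ, 0 < a → 1 / (1 + l) < F a ∧ F a < 1 := by
    intro a ha
    have hb : 0 < a ^ Δ₂ := Real.rpow_pos_of_pos ha _
    have hv : 1 < 1 + l * a ^ Δ₂ := by nlinarith
    have hy0 : 0 < 1 / (1 + l * a ^ Δ₂) := by positivity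
    have hy1 : 1 / (1 + l * a ^ Δ₂) < 1 := by
      rw [div_lt_one (by linarith)]; linarith
    have hw0 : 0 < (1 / (1 + l * a ^ Δ₂)) ^ Δ₁ := Real.rpow_pos_of_pos hy0 _
    have hw1 : (1 / (1 + l * a ^ Δ₂)) ^ Δ₁ < 1 :=
      Real.rpow_lt_one hy0.le hy1 hp0
    constructor
    · rw [hF]
      apply div_lt_div_of_pos_left one_pos (by nlinarith) (by nlinarith)
    · rw [hF]
      simp only []
      rw [div_lt_one (by nlinarith)]
      nlinarith
  have Fpos : ∀ a : ℝ, 0 < a → 0 < F a := by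
    intro a ha
    have := (Fb a ha).1
    have : (0:ℝ) < 1 / (1 + l) := by positivity
    linarith [(Fb a ha).1]
  have gb : ∀ u : ℝ, -Real.log (1 + l) < g u ∧ g u < 0 := by
    intro u
    have he := Real.exp_pos u
    obtain ⟨hb1, hb2⟩ := Fb _ he
    have hFp : 0 < F (Real.exp u) := Fpos _ he
    constructor
    · rw [hg]
      have : Real.log (1 / (1 + l)) < Real.log (F (Real.exp u)) :=
        Real.log_lt_log (by positivity) hb1
      rwa [one_div, Real.log_inv] at this
    · exact Real.log_neg hFp hb2
  have hFg : ∀ u : ℝ, F (Real.exp u) = Real.exp (g u) := fun u =>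
    (Real.exp_log (Fpos _ (Real.exp_pos u))).symm
  set gd : ℝ → ℝ := fun u =>
    l ^ 2 * Δ₁ * Δ₂ * (Real.exp u ^ Δ₂ * (1 / (1 + l * Real.exp u ^ Δ₂)) ^ Δ₁)
      / ((1 + l * Real.exp u ^ Δ₂) * (1 + l * (1 / (1 + l * Real.exp u ^ Δ₂)) ^ Δ₁)) with hgd
  have hv : ∀ u : ℝ, 0 < 1 + l * Real.exp u ^ Δ₂ := by
    intro u
    have hb : 0 < Real.exp u ^ Δ₂ := Real.rpow_pos_of_pos (Real.exp_pos u) _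
    nlinarith
  have hw : ∀ u : ℝ, 0 < (1 / (1 + l * Real.exp u ^ Δ₂)) ^ Δ₁ := by
    intro u
    have h1 := hv u
    exact Real.rpow_pos_of_pos (by positivity) _
  have hgd_nonneg : ∀ u : ℝ, 0 ≤ gd u := by
    intro u
    have h1 := hv u
    have h2 := hw u
    have hb : 0 < Real.exp u ^ Δ₂ := Real.rpow_pos_of_pos (Real.exp_pos u) _
    rw [hgd]
    have h3 : 0 < 1 + l * (1 / (1 + l * Real.exp u ^ Δ₂)) ^ Δ₁ := by nlinarith
    positivity
  have hgd_le : ∀ u : ℝ, gd u ≤ c := by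
    intro u
    have hvu := hv u
    have hb : 0 < Real.exp u ^ Δ₂ := Real.rpow_pos_of_pos (Real.exp_pos u) _
    set y : ℝ := 1 / (1 + l * Real.exp u ^ Δ₂) with hydef
    have hy0 : 0 < y := by positivity
    have hwu : 0 < y ^ Δ₁ := Real.rpow_pos_of_pos hy0 _
    have hz : 0 < 1 + l * y ^ Δ₁ := by nlinarith
    have hmain := main_ineq h1 h2 hLdef hl0 hl hy0.le
    rw [hgd, hc_eq]
    rw [div_le_div_iff₀ (by positivity) (by positivity)]
    have hyv : (1 - y) * (1 + l * Real.exp u ^ Δ₂) = l * Real.exp u ^ Δ₂ := by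
      rw [hydef]; field_simp; ring
    have h' := mul_le_mul_of_nonneg_right hmain hvu.le
    calc l ^ 2 * Δ₁ * Δ₂ * (Real.exp u ^ Δ₂ * y ^ Δ₁) * (2 * L)
        = 2 * L * l * (Δ₁ * Δ₂) * (y ^ Δ₁ * (1 - y)) * (1 + l * Real.exp u ^ Δ₂) := by
          linear_combination (-(2 * L * l * Δ₁ * Δ₂ * y ^ Δ₁)) * hyv
      _ ≤ (L + l) * (1 + l * y ^ Δ₁) * (1 + l * Real.exp u ^ Δ₂) := h'
      _ = (L + l) * ((1 + l * Real.exp u ^ Δ₂) * (1 + l * y ^ Δ₁)) := by ring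
  have hderiv : ∀ u : ℝ, HasDerivAt g (gd u) u := by
    intro u
    have hE : 0 < Real.exp u := Real.exp_pos u
    have hvu := hv u
    have hy0 : (0:ℝ) < (1 + l * Real.exp u ^ Δ₂)⁻¹ := by positivity
    have hwu := hw u
    have hz : 0 < 1 + l * ((1 + l * Real.exp u ^ Δ₂)⁻¹) ^ Δ₁ := by
      have h2 := hw u
      rw [one_div] at h2
      nlinarith
    have d1 : HasDerivAt Real.exp (Real.exp u) u := Real.hasDerivAt_exp u
    have d2 : HasDerivAt (fun x => Real.exp x ^ Δ₂)
        (Real.exp u * Δ₂ * Real.exp u ^ (Δ₂ - 1)) u :=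
      d1.rpow_const (Or.inl (ne_of_gt hE))
    have d3 : HasDerivAt (fun x => 1 + l * Real.exp x ^ Δ₂)
        (l * (Real.exp u * Δ₂ * Real.exp u ^ (Δ₂ - 1))) u :=
      (d2.const_mul l).const_add 1
    have d4 : HasDerivAt (fun x => (1 + l * Real.exp x ^ Δ₂)⁻¹)
        (-(l * (Real.exp u * Δ₂ * Real.exp u ^ (Δ₂ - 1))) / (1 + l * Real.exp u ^ Δ₂) ^ 2)
        u := d3.inv (ne_of_gt hvu)
    have d5 := d4.rpow_const (p := Δ₁) (Or.inl (ne_of_gt hy0))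
    have d6 := (d5.const_mul l).const_add 1
    have d7 := d6.log (ne_of_gt hz)
    have hgeq : g = fun x => -Real.log (1 + l * ((1 + l * Real.exp x ^ Δ₂)⁻¹) ^ Δ₁) := by
      funext x
      rw [hg]
      simp only [hF, one_div, Real.log_inv]
    rw [hgeq]
    refine d7.neg.congr_deriv (Eq.symm ?_)
    have hE1 : Real.exp u ^ (Δ₂ - 1) * Real.exp u = Real.exp u ^ Δ₂ := by
      nth_rewrite 2 [← Real.rpow_one (Real.exp u)]
      rw [← Real.rpow_add hE]; ring_nf
    have hE2 : ((1 + l * Real.exp u ^ Δ₂)⁻¹) ^ (Δ₁ - 1)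
        = ((1 + l * Real.exp u ^ Δ₂)⁻¹) ^ Δ₁ * (1 + l * Real.exp u ^ Δ₂) := by
      rw [Real.rpow_sub hy0, Real.rpow_one, div_eq_mul_inv, inv_inv]
    rw [hgd]
    simp only [one_div]
    rw [hE2, Real.rpow_sub hE, Real.rpow_one]
    have hEne := ne_of_gt hE
    have hvne := ne_of_gt hvu
    have hzne := ne_of_gt hz
    field_simp
  have hlip : ∀ x y : ℝ, |g y - g x| ≤ c * |y - x| := by
    intro x y
    have H := Convex.norm_image_sub_le_of_norm_hasDerivWithin_le
      (fun z _ => (hderiv z).hasDerivWithinAt)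
      (fun z _ => by
        rw [Real.norm_eq_abs, abs_of_nonneg (hgd_nonneg z)]
        exact hgd_le z)
      convex_univ (Set.mem_univ x) (Set.mem_univ y)
    simpa [Real.norm_eq_abs] using H
  have hlipW : LipschitzWith ⟨c, hc0.le⟩ g :=
    LipschitzWith.of_dist_le_mul fun x y => by
      rw [Real.dist_eq, Real.dist_eq]
      exact hlip y x
  have hK1 : (⟨c, hc0.le⟩ : NNReal) < 1 := by
    change ((⟨c, hc0.le⟩ : NNReal) : ℝ) < ((1 : NNReal) : ℝ)
    simpa using hc1
  have hcon : ContractingWith ⟨c, hc0.le⟩ g := ⟨hK1, hlipW⟩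
  set u0 : ℝ := ContractingWith.fixedPoint g hcon with hu0def
  have hfixed : g u0 = u0 := hcon.fixedPoint_isFixedPt
  have hu0neg : u0 < 0 := by
    conv_lhs => rw [← hfixed]
    exact (gb u0).2
  refine ⟨Real.exp u0, ⟨Real.exp_pos u0, ?_⟩, ?_, ?_, ?_⟩
  · calc Real.exp u0 ≤ Real.exp 0 := Real.exp_le_exp.mpr hu0neg.le
      _ = 1 := Real.exp_zero
  · have h := hFg u0
    rw [hfixed] at h
    exact h
  · rintro a ⟨ha0, _⟩ hfa
    have hfp : Function.IsFixedPt g (Real.log a) := by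
      show g (Real.log a) = Real.log a
      have : g (Real.log a) = Real.log (F (Real.exp (Real.log a))) := rfl
      rw [this, Real.exp_log ha0, show F a = a from hfa]
    have heq := hcon.fixedPoint_unique hfp
    calc a = Real.exp (Real.log a) := (Real.exp_log ha0).symm
      _ = Real.exp u0 := by rw [heq]
  · refine ⟨c, hc0, le_refl c, hc1, ?_⟩
    rintro a₀ ⟨ha0, _⟩ t ht
    obtain ⟨n, rfl⟩ : ∃ n, t = n + 1 := ⟨t - 1, (Nat.succ_pred_eq_of_pos ht).symm⟩
    have hiter : ∀ (m : ℕ) (u : ℝ), F^[m] (Real.exp u) = Real.exp (g^[m] u) := by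
      intro m
      induction m with
      | zero => intro u; simp
      | succ k ih =>
        intro u
        rw [Function.iterate_succ_apply, Function.iterate_succ_apply, hFg u, ih (g u)]
    have hcontr : ∀ (m : ℕ) (u : ℝ), |g^[m] u - u0| ≤ c ^ m * |u - u0| := by
      intro m u
      have hl2 := (hlipW.iterate m).dist_le_mul u u0
      rw [Function.IsFixedPt.iterate hfixed m] at hl2
      rw [Real.dist_eq, Real.dist_eq] at hl2
      refine hl2.trans (le_of_eq ?_)
      congr 1
    set u₀ : ℝ := Real.log a₀ with hu₀
    have ha₀exp : Real.exp u₀ = a₀ := Real.exp_log ha0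
    have hstep1 : |F^[n+1] a₀ - Real.exp u0| ≤ |g^[n+1] u₀ - u0| := by
      rw [← ha₀exp, hiter (n+1) u₀]
      apply exp_abs_sub ?_ hu0neg.le
      rw [Function.iterate_succ_apply']
      exact ((gb _).2).le
    have hstep2 : |g^[n+1] u₀ - u0| ≤ c ^ n * |g u₀ - u0| := by
      rw [Function.iterate_succ_apply]
      exact hcontr n (g u₀)
    have hstep3 : |g u₀ - u0| ≤ Real.log (1 + l) := by
      have hgu := gb u₀
      have hu0b : -Real.log (1 + l) < u0 := by
        conv_rhs => rw [← hfixed]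
        exact (gb u0).1
      apply abs_le.mpr
      refine ⟨by linarith [hgu.1, hu0neg], by linarith [hgu.2, hu0b]⟩
    calc |F^[n+1] a₀ - Real.exp u0| ≤ c ^ n * |g u₀ - u0| := hstep1.trans hstep2
      _ ≤ c ^ n * Real.log (1 + l) :=
          mul_le_mul_of_nonneg_left hstep3 (pow_nonneg hc0.le n)
      _ = c ^ (n + 1 - 1) * Real.log (l + 1) := by rw [add_comm 1 l]; norm_num
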